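/- arXiv:1012.0679 — 3 statements merged into one kernel-verified Lean document; each statement's English description precedes it below -/
import Mathlib

section
/- Let A be a real symmetric n×n matrix with all eigenvalues in [-1, 1]. If n ≥ 2, m ≥ 3 are integers with n ≤ m and the quantity -2·trace(A²) + (trace A)² - 2(m-n)·trace(A) - n(2m - n - 2) is ≥ 0, then either A = -Id, or A = Id and n = m. -/
open Finset in
/-- The purely analytic part: if `λ : Fin n → ℝ` with each `λ i ∈ [-1,1]` and
`0 ≤ -2 Σλ² + (Σλ)² - 2(m-n)Σλ - n(2m-n-2)`, with `2 ≤ n ≤ m`, `3 ≤ m`, then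
either all `λ i = -1` or (all `λ i = 1` and `n = m`). -/
lemma stmt7_aux (n m : ℕ) (hn : 2 ≤ n) (hm : 3 ≤ m) (hnm : n ≤ m)
    (lam : Fin n → ℝ) (hb : ∀ i, lam i ∈ Set.Icc (-1 : ℝ) 1)
    (h : 0 ≤ -2 * (∑ i, (lam i) ^ 2) + (∑ i, lam i) ^ 2
      - 2 * ((m : ℝ) - n) * (∑ i, lam i) - n * (2 * m - n - 2)) :
    (∀ i, lam i = -1) ∨ ((∀ i, lam i = 1) ∧ n = m) := by
  set t : ℝ := ∑ i, lam i with ht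
  set s : ℝ := ∑ i, (lam i) ^ 2 with hs
  have hcard : (#(Finset.univ : Finset (Fin n)) : ℝ) = (n : ℝ) := by simp
  have hCS : t ^ 2 ≤ (n : ℝ) * s := by
    have := sq_sum_le_card_mul_sum_sq (s := (Finset.univ : Finset (Fin n))) (f := lam)
    rw [hcard] at this
    exact this
  have htle : t ≤ (n : ℝ) := by
    calc t ≤ ∑ _i : Fin n, (1 : ℝ) := Finset.sum_le_sum fun i _ => (hb i).2
    _ = n := by simp
  have htge : -(n : ℝ) ≤ t := by
    calc (-(n : ℝ)) = ∑ _i : Fin n, (-1 : ℝ) := by simp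
    _ ≤ t := Finset.sum_le_sum fun i _ => (hb i).1
  have hn' : (2 : ℝ) ≤ (n : ℝ) := by exact_mod_cast hn
  have hnm' : (n : ℝ) ≤ (m : ℝ) := by exact_mod_cast hnm
  have hm' : (3 : ℝ) ≤ (m : ℝ) := by exact_mod_cast hm
  -- multiply `h` by `n` and use Cauchy-Schwarz:
  have key : 0 ≤ (t + n) * (((n : ℝ) - 2) * t - n * (2 * m - n - 2)) := by
    nlinarith [mul_nonneg (by linarith : (0:ℝ) ≤ (n:ℝ)) h]
  by_cases hteq : t = -(n : ℝ)
  · -- all eigenvalues are -1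
    left
    intro i
    by_contra hne
    have hlt : -1 < lam i := lt_of_le_of_ne (hb i).1 (Ne.symm hne)
    have : -(n : ℝ) < t := by
      have h1 : ∑ j ∈ Finset.univ.erase i, (-1 : ℝ) ≤ ∑ j ∈ Finset.univ.erase i, lam j :=
        Finset.sum_le_sum fun j _ => (hb j).1
      have h2 : t = lam i + ∑ j ∈ Finset.univ.erase i, lam j :=
        (Finset.add_sum_erase _ _ (Finset.mem_univ i)).symm
      have h3 : (#(Finset.univ.erase i) : ℝ) = (n : ℝ) - 1 := by
        rw [Finset.card_erase_of_mem (Finset.mem_univ i)]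
        simp
        rw [Nat.cast_sub (by omega)]
        simp
      rw [h2]
      have : ∑ j ∈ Finset.univ.erase i, (-1 : ℝ) = -((n : ℝ) - 1) := by
        rw [Finset.sum_const, nsmul_eq_mul, h3]; ring
      nlinarith
    exact absurd hteq (by linarith)
  · -- t > -n, so the second factor is ≥ 0, forcing n = m and t = n
    have htgt : -(n : ℝ) < t := lt_of_le_of_ne htge (Ne.symm hteq)
    have hfac : 0 ≤ ((n : ℝ) - 2) * t - n * (2 * m - n - 2) := by
      by_contra hc
      push_neg at hc
      nlinarith [mul_neg_of_pos_of_neg (by linarith : (0:ℝ) < t + n) hc]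
    -- from t ≤ n: ((n-2))t ≤ (n-2)n, so n(2m-n-2) ≤ n(n-2), i.e. m ≤ n
    have hmn : m = n := by
      have h1 : ((n : ℝ) - 2) * t ≤ ((n : ℝ) - 2) * n :=
        mul_le_mul_of_nonneg_left htle (by linarith)
      have : (n : ℝ) * (2 * m - n - 2) ≤ (n : ℝ) * (n - 2) := by nlinarith
      have : (m : ℝ) ≤ (n : ℝ) := by nlinarith
      exact le_antisymm (by exact_mod_cast this) hnm
    have hn3 : (3 : ℝ) ≤ (n : ℝ) := by
      have : 3 ≤ n := hmn ▸ hm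
      exact_mod_cast this
    have hteqn : t = (n : ℝ) := by
      have hmnr : (m : ℝ) = (n : ℝ) := by exact_mod_cast hmn
      rw [hmnr] at hfac
      have h4 : ((n : ℝ) - 2) * (n : ℝ) ≤ ((n : ℝ) - 2) * t := by nlinarith [hfac]
      have h5 := le_of_mul_le_mul_left h4 (by linarith : (0:ℝ) < (n : ℝ) - 2)
      linarith
    right
    refine ⟨?_, hmn.symm⟩
    intro i
    by_contra hne
    have hlt : lam i < 1 := lt_of_le_of_ne (hb i).2 hne
    have : t < (n : ℝ) := by
      have h1 : ∑ j ∈ Finset.univ.erase i, lam j ≤ ∑ j ∈ Finset.univ.erase i, (1 : ℝ) :=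
        Finset.sum_le_sum fun j _ => (hb j).2
      have h2 : t = lam i + ∑ j ∈ Finset.univ.erase i, lam j :=
        (Finset.add_sum_erase _ _ (Finset.mem_univ i)).symm
      have h3 : (#(Finset.univ.erase i) : ℝ) = (n : ℝ) - 1 := by
        rw [Finset.card_erase_of_mem (Finset.mem_univ i)]
        simp
        rw [Nat.cast_sub (by omega)]
        simp
      have : ∑ j ∈ Finset.univ.erase i, (1 : ℝ) = (n : ℝ) - 1 := by
        rw [Finset.sum_const, nsmul_eq_mul, h3]; ring
      nlinarith
    linarith [hteqn]

/-- Let `A` be a real symmetric `n×n` matrix with all eigenvalues in `[-1,1]`,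
`n ≥ 2`, `m ≥ 3`, `n ≤ m`. If
`-2·trace(A²) + (trace A)² - 2(m-n)·trace A - n(2m - n - 2) ≥ 0`,
then `A = -Id`, or `A = Id` and `n = m`. -/
theorem stmt7 (n m : ℕ) (hn : 2 ≤ n) (hm : 3 ≤ m) (hnm : n ≤ m)
    (A : Matrix (Fin n) (Fin n) ℝ) (hA : A.IsSymm)
    (heig : ∀ μ : ℝ, Module.End.HasEigenvalue (Matrix.toLin' A) μ → μ ∈ Set.Icc (-1 : ℝ) 1)
    (hineq : 0 ≤ -2 * (A * A).trace + A.trace ^ 2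
      - 2 * ((m : ℝ) - n) * A.trace - n * (2 * m - n - 2)) :
    A = -1 ∨ (A = 1 ∧ n = m) := by
  have hherm : A.IsHermitian := by
    rw [Matrix.IsHermitian, Matrix.conjTranspose_eq_transpose_of_trivial]
    exact hA
  set lam := hherm.eigenvalues with hlam
  set U : Matrix (Fin n) (Fin n) ℝ := (hherm.eigenvectorUnitary : Matrix (Fin n) (Fin n) ℝ) with hU
  have hUU : U * star U = 1 := Matrix.mem_unitaryGroup_iff.mp hherm.eigenvectorUnitary.2
  have hUU' : star U * U = 1 := Matrix.mem_unitaryGroup_iff'.mp hherm.eigenvectorUnitary.2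
  have hspec : A = U * Matrix.diagonal (RCLike.ofReal ∘ lam) * star U := hherm.spectral_theorem
  have hofReal : (RCLike.ofReal ∘ lam : Fin n → ℝ) = lam := by
    funext i; simp [RCLike.ofReal]
  rw [hofReal] at hspec
  -- trace of A is the sum of eigenvalues
  have htr : A.trace = ∑ i, lam i := by
    rw [hspec, Matrix.trace_mul_cycle, hUU', Matrix.one_mul, Matrix.trace_diagonal]
  -- trace of A*A is the sum of squares of eigenvalues
  have htr2 : (A * A).trace = ∑ i, (lam i) ^ 2 := by
    have : A * A = U * (Matrix.diagonal lam * Matrix.diagonal lam) * star U := by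
      rw [hspec]
      simp only [Matrix.mul_assoc]
      rw [← Matrix.mul_assoc (star U) U, hUU', Matrix.one_mul]
    rw [this, Matrix.trace_mul_cycle, hUU', Matrix.one_mul,
      Matrix.diagonal_mul_diagonal, Matrix.trace_diagonal]
    simp [pow_two]
  -- all eigenvalues are in [-1, 1]
  have hb : ∀ i, lam i ∈ Set.Icc (-1 : ℝ) 1 := by
    intro i
    apply heig
    have hmem : lam i ∈ spectrum ℝ A := hherm.eigenvalues_mem_spectrum_real i
    rw [← AlgEquiv.spectrum_eq (Matrix.toLinAlgEquiv' : Matrix (Fin n) (Fin n) ℝ ≃ₐ[ℝ] _)]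
      at hmem
    rwa [Module.End.hasEigenvalue_iff_mem_spectrum]
  rw [htr, htr2] at hineq
  rcases stmt7_aux n m hn hm hnm lam hb hineq with h | ⟨h, hnm'⟩
  · left
    have hlamconst : lam = fun _ => (-1 : ℝ) := funext h
    rw [hspec, hlamconst]
    have : Matrix.diagonal (fun _ => (-1 : ℝ)) = (-1 : Matrix (Fin n) (Fin n) ℝ) := by
      ext i j
      by_cases hij : i = j <;> simp [Matrix.diagonal, hij]
    rw [this]
    rw [Matrix.mul_neg, Matrix.mul_one, Matrix.neg_mul, hUU]
  · right
    refine ⟨?_, hnm'⟩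
    have hlamconst : lam = fun _ => (1 : ℝ) := funext h
    rw [hspec, hlamconst]
    have : Matrix.diagonal (fun _ => (1 : ℝ)) = (1 : Matrix (Fin n) (Fin n) ℝ) := by
      simp
    rw [this, Matrix.mul_one, hUU]
end

section
/- Let be a real symmetric m×m matrix with all eigenvalues in [-1,1], m ≥ 3. If -2·trace(²) + (trace Â)² - m(m-2) ≥ 0, then = Id or = -Id. -/
/-- Let `Â` be a real symmetric `m×m` matrix with all eigenvalues in `[-1,1]`,
`m ≥ 3`. If `-2·trace(Â²) + (trace Â)² - m(m-2) ≥ 0`, then `Â = Id` or `Â = -Id`. -/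
theorem stmt8 (m : ℕ) (hm : 3 ≤ m)
    (A : Matrix (Fin m) (Fin m) ℝ) (hA : A.IsSymm)
    (heig : ∀ μ : ℝ, Module.End.HasEigenvalue (Matrix.toLin' A) μ → μ ∈ Set.Icc (-1 : ℝ) 1)
    (hineq : 0 ≤ -2 * (A * A).trace + A.trace ^ 2 - m * ((m : ℝ) - 2)) :
    A = 1 ∨ A = -1 := by
  have hH : A.IsHermitian := hA
  set U : Matrix (Fin m) (Fin m) ℝ := (hH.eigenvectorUnitary : Matrix (Fin m) (Fin m) ℝ)
  have hUU : star U * U = 1 := Unitary.star_mul_self_of_mem hH.eigenvectorUnitary.2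
  have hUU' : U * star U = 1 := Unitary.mul_star_self_of_mem hH.eigenvectorUnitary.2
  set l : Fin m → ℝ := hH.eigenvalues with hl
  have hspec : A = U * Matrix.diagonal l * star U := by
    have := hH.spectral_theorem
    simpa using this
  -- eigenvalue bounds
  have hbound : ∀ i, l i ∈ Set.Icc (-1 : ℝ) 1 := by
    intro i
    apply heig
    rw [Module.End.hasEigenvalue_iff_mem_spectrum]
    show l i ∈ spectrum ℝ (Matrix.toLinAlgEquiv' A)
    rw [AlgEquiv.spectrum_eq]
    exact hH.eigenvalues_mem_spectrum_real i
  -- traces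
  have htr : A.trace = ∑ i, l i := by
    rw [hspec, Matrix.trace_mul_cycle, hUU, one_mul, Matrix.trace_diagonal]
  have htr2 : (A * A).trace = ∑ i, (l i) ^ 2 := by
    have key : A * A = U * (Matrix.diagonal l * Matrix.diagonal l) * star U := by
      rw [hspec]
      simp only [mul_assoc]
      rw [← mul_assoc (star U) U, hUU, one_mul]
    rw [key, Matrix.trace_mul_cycle, hUU, one_mul,
      Matrix.diagonal_mul_diagonal, Matrix.trace_diagonal]
    simp [sq]
  set s : ℝ := ∑ i, l i with hs
  set q : ℝ := ∑ i, (l i) ^ 2 with hq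
  rw [htr, htr2] at hineq
  have hm3 : (3 : ℝ) ≤ m := by exact_mod_cast hm
  have hmpos : (0 : ℝ) < m := by linarith
  -- Cauchy-Schwarz
  have hCS : s ^ 2 ≤ m * q := by
    have := sq_sum_le_card_mul_sum_sq (s := Finset.univ) (f := l)
    simpa [hs, hq] using this
  -- q ≤ m
  have hqm : q ≤ m := by
    have : ∀ i ∈ Finset.univ, (l i) ^ 2 ≤ 1 := by
      intro i _
      have h := hbound i
      rw [Set.mem_Icc] at h
      nlinarith [h.1, h.2]
    calc q ≤ ∑ _i : Fin m, (1 : ℝ) := Finset.sum_le_sum this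
      _ = m := by simp
  -- s² ≥ m²
  have hs2 : (m : ℝ) ^ 2 ≤ s ^ 2 := by nlinarith
  have hs2' : s ^ 2 = (m : ℝ) ^ 2 := le_antisymm (by nlinarith) hs2
  have hqeq : q = m := by nlinarith
  -- all eigenvalues equal s/m
  obtain ⟨c, hmc⟩ : ∃ c : ℝ, (m : ℝ) * c = s :=
    ⟨s / m, by field_simp⟩
  have hc2 : c ^ 2 = 1 := by
    have h2 : (m : ℝ) ^ 2 * c ^ 2 = (m : ℝ) ^ 2 * 1 := by
      have h3 : (m : ℝ) ^ 2 * c ^ 2 = s ^ 2 := by rw [← hmc]; ring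
      rw [h3, hs2', mul_one]
    exact mul_left_cancel₀ (by positivity) h2
  have hvar : ∑ i, (l i - c) ^ 2 = 0 := by
    have hexp : ∀ i : Fin m, (l i - c) ^ 2 = l i ^ 2 - 2 * c * l i + c ^ 2 := fun i => by ring
    have h1 : ∑ i, (l i - c) ^ 2 = q - 2 * c * s + m * c ^ 2 := by
      simp only [hexp, Finset.sum_add_distrib, Finset.sum_sub_distrib, ← Finset.mul_sum,
        Finset.sum_const, Finset.card_univ, Fintype.card_fin, nsmul_eq_mul, ← hs, ← hq]
    rw [h1]
    nlinarith [hmc, hc2, hqeq]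
  have hleq : ∀ i, l i = c := by
    intro i
    have h0 : (l i - c) ^ 2 = 0 :=
      Finset.sum_eq_zero_iff_of_nonneg (fun i _ => sq_nonneg (l i - c)) |>.mp hvar i
        (Finset.mem_univ i)
    have := pow_eq_zero_iff (n := 2) (by norm_num) |>.mp h0
    linarith [sub_eq_zero.mp this]
  have hAc : A = c • (1 : Matrix (Fin m) (Fin m) ℝ) := by
    rw [hspec]
    have hd : Matrix.diagonal l = c • (1 : Matrix (Fin m) (Fin m) ℝ) := by
      rw [show l = fun _ => c from funext hleq]
      rw [Matrix.smul_one_eq_diagonal]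
    rw [hd, Matrix.mul_smul, Matrix.smul_mul, mul_one, hUU']
  have hcc : c = 1 ∨ c = -1 := mul_self_eq_one_iff.mp (by nlinarith [hc2])
  rcases hcc with h | h
  · left; rw [hAc, h, one_smul]
  · right; rw [hAc, h]; simp
end

section
/- Let Σ₁, Σ₂ be sets with quadratic forms Q₁, Q₂ on spaces of sections, and Q defined on pairs by Q(η) = ∫_{Σ₁} Q₂((η₂)_p) dΣ₁ + ∫_{Σ₂} Q₁((η₁)_q) dΣ₂ (with Q(η_i) = Q_i(η_i)·vol(Σ_j) for sections depending on only one factor). If Q₁ ≥ 0 and Q₂ ≥ 0 then Q ≥ 0; conversely if Q ≥ 0 and the volumes of Σ₁, Σ₂ are positive and finite, then Q₁ ≥ 0 and Q₂ ≥ 0. -/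
open MeasureTheory

/-- Abstract version of "a product of minimal immersions is stable iff both factors are
stable". `Σ₁, Σ₂` are measure spaces of positive finite volume, `Q₁, Q₂` are the index
forms on sections over each factor (vanishing on the zero sections `z₁, z₂`), and the
index form of a general section `η = (f, g)` over the product is
`Q(η) = ∫_{Σ₁} Q₂(f p) + ∫_{Σ₂} Q₁(g q)`. Then `Q₁ ≥ 0` and `Q₂ ≥ 0` imply `Q ≥ 0`, and
conversely. -/
theorem stmt14 {S₁ S₂ : Type*} [MeasureSpace S₁] [MeasureSpace S₂]
    [IsFiniteMeasure (volume : Measure S₁)] [IsFiniteMeasure (volume : Measure S₂)]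
    (hpos₁ : 0 < (volume : Measure S₁) Set.univ)
    (hpos₂ : 0 < (volume : Measure S₂) Set.univ)
    {Γ₁ Γ₂ : Type*} (Q₁ : Γ₁ → ℝ) (Q₂ : Γ₂ → ℝ)
    (z₁ : Γ₁) (z₂ : Γ₂) (hz₁ : Q₁ z₁ = 0) (hz₂ : Q₂ z₂ = 0)
    (Q : (S₁ → Γ₂) × (S₂ → Γ₁) → ℝ)
    (hQ : ∀ η : (S₁ → Γ₂) × (S₂ → Γ₁),
      Q η = (∫ p, Q₂ (η.1 p)) + ∫ q, Q₁ (η.2 q)) :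
    ((∀ x, 0 ≤ Q₁ x) ∧ (∀ y, 0 ≤ Q₂ y)) ↔ (∀ η, 0 ≤ Q η) := by
  constructor
  · rintro ⟨h1, h2⟩ η
    rw [hQ]
    exact add_nonneg (integral_nonneg fun p => h2 _) (integral_nonneg fun q => h1 _)
  · intro h
    have v1 : (0:ℝ) < ((volume : Measure S₁) Set.univ).toReal :=
      ENNReal.toReal_pos hpos₁.ne' (measure_ne_top _ _)
    have v2 : (0:ℝ) < ((volume : Measure S₂) Set.univ).toReal :=
      ENNReal.toReal_pos hpos₂.ne' (measure_ne_top _ _)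
    constructor
    · intro x
      have := h (fun _ => z₂, fun _ => x)
      rw [hQ] at this
      simp only [integral_const, smul_eq_mul, hz₂, mul_zero, zero_add] at this
      exact nonneg_of_mul_nonneg_right this v2
    · intro y
      have := h (fun _ => y, fun _ => z₁)
      rw [hQ] at this
      simp only [integral_const, smul_eq_mul, hz₁, mul_zero, add_zero] at this
      exact nonneg_of_mul_nonneg_right this v1
end
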